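/- For every natural number l, r_{l+1} = Σ_{k=0}^{l} C(l,k) s_k, where r_m = Σ_j S(m,j)·j! and s_k = Σ_j S(k,j)·(j+1)!. -/
import Mathlib


def stirling2 : ℕ → ℕ → ℕ
  | 0, 0 => 1
  | 0, _ + 1 => 0
  | _ + 1, 0 => 0
  | n + 1, k + 1 => stirling2 n k + (k + 1) * stirling2 n (k + 1)

/-- Fubini number: number of preferential arrangements of an `l`-set. -/
def fubini (l : ℕ) : ℕ := ∑ k ∈ Finset.range (l + 1), stirling2 l k * Nat.factorial k

/-- Barred preferential arrangement number. -/
def barredFubini (l : ℕ) : ℕ :=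
  ∑ k ∈ Finset.range (l + 1), stirling2 l k * Nat.factorial (k + 1)

lemma stirling2_succ_zero (n : ℕ) : stirling2 (n + 1) 0 = 0 := by simp [stirling2]

lemma stirling2_eq_zero : ∀ {n k : ℕ}, n < k → stirling2 n k = 0
  | 0, _ + 1, _ => rfl
  | n + 1, k + 1, h => by
    have h1 : n < k := Nat.lt_of_succ_lt_succ h
    rw [stirling2, stirling2_eq_zero h1, stirling2_eq_zero (Nat.lt_succ_of_lt h1)]
    simp

lemma key : ∀ n m : ℕ, stirling2 (n + 1) (m + 1)
    = ∑ k ∈ Finset.range (n + 1), n.choose k * stirling2 k m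
  | 0, m => by
    rw [stirling2, stirling2_eq_zero (Nat.succ_pos m)]
    simp
  | n + 1, m => by
    have hA : ∑ k ∈ Finset.range (n + 2), n.choose k * stirling2 k m
        = stirling2 (n + 1) (m + 1) := by
      rw [Finset.sum_range_succ, Nat.choose_succ_self, key n m]
      simp
    rw [Finset.sum_range_succ'] at hA
    have hT : ∑ k ∈ Finset.range (n + 2), (n + 1).choose k * stirling2 k m
        = (∑ j ∈ Finset.range (n + 1), n.choose j * stirling2 (j + 1) m)
          + stirling2 (n + 1) (m + 1) := by
      rw [Finset.sum_range_succ', ← hA]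
      have : ∀ j ∈ Finset.range (n + 1), (n + 1).choose (j + 1) * stirling2 (j + 1) m
          = n.choose j * stirling2 (j + 1) m + n.choose (j + 1) * stirling2 (j + 1) m := by
        intro j _
        rw [Nat.choose_succ_succ, Nat.add_mul]
      rw [Finset.sum_congr rfl this, Finset.sum_add_distrib]
      simp [Nat.add_assoc]
    rw [hT]
    cases m with
    | zero =>
      have : ∀ j ∈ Finset.range (n + 1), n.choose j * stirling2 (j + 1) 0 = 0 := by
        intro j _; rw [stirling2_succ_zero]; ring
      rw [Finset.sum_eq_zero this, Nat.zero_add]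
      show stirling2 (n + 1) 0 + 1 * stirling2 (n + 1) 1 = _
      rw [stirling2_succ_zero]
      ring
    | succ m' =>
      have hs : ∑ j ∈ Finset.range (n + 1), n.choose j * stirling2 (j + 1) (m' + 1)
          = stirling2 (n + 1) (m' + 1) + (m' + 1) * stirling2 (n + 1) (m' + 2) := by
        have : ∀ j ∈ Finset.range (n + 1), n.choose j * stirling2 (j + 1) (m' + 1)
            = n.choose j * stirling2 j m' + (m' + 1) * (n.choose j * stirling2 j (m' + 1)) := by
          intro j _
          rw [show stirling2 (j + 1) (m' + 1)
            = stirling2 j m' + (m' + 1) * stirling2 j (m' + 1) from rfl]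
          ring
        rw [Finset.sum_congr rfl this, Finset.sum_add_distrib, ← Finset.mul_sum,
          ← key n m', ← key n (m' + 1)]
      rw [hs]
      show stirling2 (n + 1) (m' + 1) + (m' + 2) * stirling2 (n + 1) (m' + 2) = _
      ring

theorem stmt_14 (l : ℕ) :
    fubini (l + 1) = ∑ k ∈ Finset.range (l + 1), l.choose k * barredFubini k := by
  have step1 : fubini (l + 1)
      = ∑ m ∈ Finset.range (l + 1), stirling2 (l + 1) (m + 1) * Nat.factorial (m + 1) := by
    unfold fubini
    rw [Finset.sum_range_succ', stirling2_succ_zero]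
    simp
  rw [step1]
  have step2 : ∀ m ∈ Finset.range (l + 1),
      stirling2 (l + 1) (m + 1) * Nat.factorial (m + 1)
      = ∑ k ∈ Finset.range (l + 1), l.choose k * (stirling2 k m * Nat.factorial (m + 1)) := by
    intro m _
    rw [key l m, Finset.sum_mul]
    exact Finset.sum_congr rfl fun k _ => by ring
  rw [Finset.sum_congr rfl step2, Finset.sum_comm]
  refine Finset.sum_congr rfl fun k hk => ?_
  rw [← Finset.mul_sum]
  congr 1
  unfold barredFubini
  have hkl : k + 1 ≤ l + 1 := Nat.succ_le_succ (Nat.lt_succ_iff.mp (Finset.mem_range.mp hk))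
  rw [← Finset.sum_range_add_sum_Ico _ hkl]
  have : ∑ m ∈ Finset.Ico (k + 1) (l + 1), stirling2 k m * Nat.factorial (m + 1) = 0 :=
    Finset.sum_eq_zero fun m hm => by
      rw [stirling2_eq_zero (Finset.mem_Ico.mp hm).1]; ring
  rw [this, Nat.add_zero]
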